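/- arXiv:2407.01019 — 3 statements merged into one kernel-verified Lean document; each statement's English description precedes it below -/
import Mathlib

section
/- For every y ∈ ℝ^m \ Z, the set T(y) is a nonempty convex subset of (0,∞) which is closed in (0,∞). Moreover, the set-valued map y ↦ T(y) is lower hemicontinuous on ℝ^m \ Z: for every y ∈ ℝ^m \ Z and every open set U ⊆ ℝ with T(y) ∩ U ≠ ∅, there exists a neighborhood 𝒲 of y such that T(z) ∩ U ≠ ∅ for every z ∈ 𝒲 ∩ (ℝ^m \ Z). -/
/-- The Lyapunov derivative `V̇(y) = ⟪∇V(y), F(y)⟫`. -/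
noncomputable def lyapDeriv {m : ℕ}
    (F : EuclideanSpace ℝ (Fin m) → EuclideanSpace ℝ (Fin m))
    (V : EuclideanSpace ℝ (Fin m) → ℝ) (y : EuclideanSpace ℝ (Fin m)) : ℝ :=
  inner ℝ (gradient V y) (F y)

/-- `g(y,x) = |F(y)ᵀ ∇²V(y + x F(y)) F(y)|`, with the Hessian realized as the derivative of
the gradient. -/
noncomputable def hessQuad {m : ℕ}
    (F : EuclideanSpace ℝ (Fin m) → EuclideanSpace ℝ (Fin m))
    (V : EuclideanSpace ℝ (Fin m) → ℝ) (y : EuclideanSpace ℝ (Fin m)) (x : ℝ) : ℝ :=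
  |(inner ℝ (F y) ((fderiv ℝ (gradient V) (y + x • F y)) (F y)) : ℝ)|

/-- `q(y,η) = η (max_{x ∈ [0,η]} g(y,x) + 1) + 2(1−λ) V̇(y)`. -/
noncomputable def qMaj {m : ℕ}
    (F : EuclideanSpace ℝ (Fin m) → EuclideanSpace ℝ (Fin m))
    (V : EuclideanSpace ℝ (Fin m) → ℝ) (lam : ℝ)
    (y : EuclideanSpace ℝ (Fin m)) (η : ℝ) : ℝ :=
  η * (sSup (hessQuad F V y '' Set.Icc 0 η) + 1) + 2 * (1 - lam) * lyapDeriv F V y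

/-- `T(y) = {η > 0 | q(y,η) ≤ 0}`. -/
noncomputable def Tmap {m : ℕ}
    (F : EuclideanSpace ℝ (Fin m) → EuclideanSpace ℝ (Fin m))
    (V : EuclideanSpace ℝ (Fin m) → ℝ) (lam : ℝ)
    (y : EuclideanSpace ℝ (Fin m)) : Set ℝ :=
  {η : ℝ | 0 < η ∧ qMaj F V lam y η ≤ 0}

section Aux

variable {m : ℕ} (F : EuclideanSpace ℝ (Fin m) → EuclideanSpace ℝ (Fin m))
    (V : EuclideanSpace ℝ (Fin m) → ℝ)

lemma gradient_contDiff_aux (hV : ContDiff ℝ 2 V) : ContDiff ℝ 1 (gradient V) := by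
  have h1 : ContDiff ℝ 1 (fderiv ℝ V) := hV.fderiv_right (by norm_num)
  exact (InnerProductSpace.toDual ℝ (EuclideanSpace ℝ (Fin m))).symm.contDiff.comp h1

lemma lyapDeriv_continuous (hF : Continuous F) (hV : ContDiff ℝ 2 V) :
    Continuous (lyapDeriv F V) :=
  ((gradient_contDiff_aux V hV).continuous).inner hF

lemma hessQuad_continuous (hF : Continuous F) (hV : ContDiff ℝ 2 V) :
    Continuous (fun p : (EuclideanSpace ℝ (Fin m)) × ℝ => hessQuad F V p.1 p.2) := by
  have hfd : Continuous (fderiv ℝ (gradient V)) :=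
    (gradient_contDiff_aux V hV).continuous_fderiv one_ne_zero
  have h1 : Continuous (fun p : (EuclideanSpace ℝ (Fin m)) × ℝ => p.1 + p.2 • F p.1) :=
    continuous_fst.add (continuous_snd.smul (hF.comp continuous_fst))
  have h2 : Continuous (fun p : (EuclideanSpace ℝ (Fin m)) × ℝ =>
      (fderiv ℝ (gradient V) (p.1 + p.2 • F p.1)) (F p.1)) :=
    (hfd.comp h1).clm_apply (hF.comp continuous_fst)
  exact ((hF.comp continuous_fst).inner h2).abs

lemma hessQuad_nonneg (y : EuclideanSpace ℝ (Fin m)) (x : ℝ) : 0 ≤ hessQuad F V y x :=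
  abs_nonneg _

lemma hessQuad_image_bddAbove (hF : Continuous F) (hV : ContDiff ℝ 2 V)
    (y : EuclideanSpace ℝ (Fin m)) (η : ℝ) :
    BddAbove (hessQuad F V y '' Set.Icc 0 η) := by
  have hc : Continuous (hessQuad F V y) :=
    by have h := (hessQuad_continuous F V hF hV).comp (Continuous.prodMk_right (X := EuclideanSpace ℝ (Fin m)) (Y := ℝ) y); exact h
  exact (isCompact_Icc.image hc).bddAbove

lemma msup_nonneg (hF : Continuous F) (hV : ContDiff ℝ 2 V)
    (y : EuclideanSpace ℝ (Fin m)) {η : ℝ} (hη : 0 ≤ η) :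
    0 ≤ sSup (hessQuad F V y '' Set.Icc 0 η) := by
  have hm : hessQuad F V y 0 ∈ hessQuad F V y '' Set.Icc 0 η :=
    ⟨0, ⟨le_refl 0, hη⟩, rfl⟩
  exact le_trans (hessQuad_nonneg F V y 0)
    (le_csSup (hessQuad_image_bddAbove F V hF hV y η) hm)

lemma msup_mono (hF : Continuous F) (hV : ContDiff ℝ 2 V)
    (y : EuclideanSpace ℝ (Fin m)) {a b : ℝ} (ha : 0 ≤ a) (hab : a ≤ b) :
    sSup (hessQuad F V y '' Set.Icc 0 a) ≤ sSup (hessQuad F V y '' Set.Icc 0 b) := by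
  refine csSup_le_csSup (hessQuad_image_bddAbove F V hF hV y b) ⟨hessQuad F V y 0, 0, ⟨le_refl 0, ha⟩, rfl⟩ ?_
  exact Set.image_mono (Set.Icc_subset_Icc le_rfl hab)

lemma qMaj_mono (hF : Continuous F) (hV : ContDiff ℝ 2 V) (lam : ℝ)
    (y : EuclideanSpace ℝ (Fin m)) {a b : ℝ} (ha : 0 < a) (hab : a ≤ b) :
    qMaj F V lam y a ≤ qMaj F V lam y b := by
  unfold qMaj
  have h1 : sSup (hessQuad F V y '' Set.Icc 0 a) ≤ sSup (hessQuad F V y '' Set.Icc 0 b) :=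
    msup_mono F V hF hV y ha.le hab
  have h2 : 0 ≤ sSup (hessQuad F V y '' Set.Icc 0 a) + 1 :=
    by linarith [msup_nonneg F V hF hV y ha.le]
  nlinarith

/-- Joint continuity of `qMaj` at points with positive second coordinate. -/
lemma qMaj_continuousAt (hF : Continuous F) (hV : ContDiff ℝ 2 V) (lam : ℝ)
    (y : EuclideanSpace ℝ (Fin m)) {η : ℝ} (hη : 0 < η) :
    ContinuousAt (fun p : (EuclideanSpace ℝ (Fin m)) × ℝ => qMaj F V lam p.1 p.2) (y, η) := by
  set B : ℝ := η + 1 with hB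
  have hcf : Continuous (fun q : ((EuclideanSpace ℝ (Fin m)) × ℝ) × ℝ =>
      hessQuad F V q.1.1 (min q.2 q.1.2)) := by
    have h := (hessQuad_continuous F V hF hV).comp
      ((continuous_fst.comp continuous_fst).prodMk
        (continuous_snd.min (continuous_snd.comp continuous_fst)) : Continuous (fun q : ((EuclideanSpace ℝ (Fin m)) × ℝ) × ℝ => (q.1.1, min q.2 q.1.2)))
    exact h
  have hG : Continuous (fun p : (EuclideanSpace ℝ (Fin m)) × ℝ =>
      sSup ((fun x => hessQuad F V p.1 (min x p.2)) '' Set.Icc 0 B)) :=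
    isCompact_Icc.continuous_sSup hcf
  have hGc : Continuous (fun p : (EuclideanSpace ℝ (Fin m)) × ℝ =>
      p.2 * (sSup ((fun x => hessQuad F V p.1 (min x p.2)) '' Set.Icc 0 B) + 1)
        + 2 * (1 - lam) * lyapDeriv F V p.1) :=
    (continuous_snd.mul (hG.add continuous_const)).add
      (continuous_const.mul ((lyapDeriv_continuous F V hF hV).comp continuous_fst))
  refine (hGc.continuousAt).congr ?_
  have hmem : {p : (EuclideanSpace ℝ (Fin m)) × ℝ | p.2 ∈ Set.Ioo 0 B} ∈ nhds (y, η) := by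
    have : Set.Ioo (0:ℝ) B ∈ nhds η := Ioo_mem_nhds hη (by simp [hB])
    exact continuous_snd.continuousAt.preimage_mem_nhds this
  filter_upwards [hmem] with p hp
  have h0 : (0:ℝ) ≤ p.2 := hp.1.le
  have hpB : p.2 ≤ B := hp.2.le
  have hmin : (fun x : ℝ => min x p.2) '' Set.Icc 0 B = Set.Icc 0 p.2 := by
    ext t
    simp only [Set.mem_image, Set.mem_Icc]
    constructor
    · rintro ⟨x, hx, rfl⟩
      exact ⟨le_min hx.1 h0, min_le_right _ _⟩
    · rintro ⟨ht1, ht2⟩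
      exact ⟨t, ⟨ht1, le_trans ht2 hpB⟩, min_eq_left ht2⟩
  have himg : (fun x => hessQuad F V p.1 (min x p.2)) '' Set.Icc 0 B
      = hessQuad F V p.1 '' Set.Icc 0 p.2 := by
    rw [show (fun x => hessQuad F V p.1 (min x p.2)) = hessQuad F V p.1 ∘ (fun x => min x p.2)
      from rfl, Set.image_comp, hmin]
  simp only [qMaj, himg]

lemma qMaj_continuousAt_fst (hF : Continuous F) (hV : ContDiff ℝ 2 V) (lam : ℝ)
    (y : EuclideanSpace ℝ (Fin m)) {η : ℝ} (hη : 0 < η) :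
    ContinuousAt (fun z => qMaj F V lam z η) y := by
  have h2 : ContinuousAt (fun z : EuclideanSpace ℝ (Fin m) => (z, η)) y :=
    (continuous_id.prodMk continuous_const).continuousAt
  exact ContinuousAt.comp (f := fun z : EuclideanSpace ℝ (Fin m) => (z, η)) (x := y)
    (qMaj_continuousAt F V hF hV lam y hη) h2

lemma qMaj_continuousAt_snd (hF : Continuous F) (hV : ContDiff ℝ 2 V) (lam : ℝ)
    (y : EuclideanSpace ℝ (Fin m)) {η : ℝ} (hη : 0 < η) :
    ContinuousAt (fun s => qMaj F V lam y s) η := by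
  have h2 : ContinuousAt (fun s : ℝ => (y, s)) η :=
    (continuous_const.prodMk continuous_id).continuousAt
  have := (qMaj_continuousAt F V hF hV lam y hη).comp h2
  exact this

end Aux

/-- **Lemma (properties of the set-valued map `T`).** For `y ∉ Z`, `T(y)` is a nonempty convex
subset of `(0,∞)` which is closed in `(0,∞)`; moreover `T` is lower hemicontinuous on
`ℝ^m \ Z`. -/
theorem Tmap_nonempty_convex_closed_lowerHemicontinuous
    {m : ℕ} (lam : ℝ) (hlam : lam ∈ Set.Ioo (0 : ℝ) 1)
    (F : EuclideanSpace ℝ (Fin m) → EuclideanSpace ℝ (Fin m))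
    (V : EuclideanSpace ℝ (Fin m) → ℝ)
    (hF : Continuous F) (hV : ContDiff ℝ 2 V) (hV0 : ∀ y, 0 ≤ V y)
    (hVdot : ∀ y, lyapDeriv F V y ≤ 0) :
    (∀ y, lyapDeriv F V y ≠ 0 →
      (Tmap F V lam y).Nonempty ∧
      Convex ℝ (Tmap F V lam y) ∧
      Tmap F V lam y ⊆ Set.Ioi 0 ∧
      Tmap F V lam y = closure (Tmap F V lam y) ∩ Set.Ioi 0) ∧
    (∀ y, lyapDeriv F V y ≠ 0 →
      ∀ U : Set ℝ, IsOpen U → (Tmap F V lam y ∩ U).Nonempty →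
        ∃ W ∈ nhds y, ∀ z ∈ W, lyapDeriv F V z ≠ 0 → (Tmap F V lam z ∩ U).Nonempty) := by
  have hlam1 : 0 < 1 - lam := by linarith [hlam.2]
  constructor
  · intro y hy
    have hylt : lyapDeriv F V y < 0 := lt_of_le_of_ne (hVdot y) hy
    have hc : 2 * (1 - lam) * lyapDeriv F V y < 0 := by nlinarith
    set c : ℝ := 2 * (1 - lam) * lyapDeriv F V y with hcdef
    -- Nonempty
    have hne : (Tmap F V lam y).Nonempty := by
      set C : ℝ := sSup (hessQuad F V y '' Set.Icc 0 1) with hC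
      have hC0 : 0 ≤ C := msup_nonneg F V hF hV y zero_le_one
      set η : ℝ := min 1 (-c / (C + 1)) with hηdef
      have hηpos : 0 < η := lt_min one_pos (div_pos (by linarith) (by linarith))
      refine ⟨η, hηpos, ?_⟩
      have h1 : sSup (hessQuad F V y '' Set.Icc 0 η) ≤ C :=
        msup_mono F V hF hV y hηpos.le (min_le_left _ _)
      have h2 : η ≤ -c / (C + 1) := min_le_right _ _
      have h3 : η * (C + 1) ≤ -c := by
        rw [le_div_iff₀ (by linarith : (0:ℝ) < C + 1)] at h2
        linarith
      have : qMaj F V lam y η ≤ η * (C + 1) + c := by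
        unfold qMaj
        have := mul_le_mul_of_nonneg_left (by linarith : sSup (hessQuad F V y '' Set.Icc 0 η) + 1 ≤ C + 1) hηpos.le
        linarith
      linarith
    refine ⟨hne, ?_, ?_, ?_⟩
    -- Convex
    · have : (Tmap F V lam y).OrdConnected := by
        constructor
        rintro a ⟨ha0, haq⟩ b ⟨hb0, hbq⟩ t ht
        have ht0 : 0 < t := lt_of_lt_of_le ha0 ht.1
        exact ⟨ht0, le_trans (qMaj_mono F V hF hV lam y ht0 ht.2) hbq⟩
      exact this.convex
    -- Subset of Ioi 0
    · intro t ht; exact ht.1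
    -- Closed in (0, ∞)
    · apply Set.Subset.antisymm
      · exact Set.subset_inter subset_closure (fun t ht => ht.1)
      · rintro t ⟨htc, ht0⟩
        refine ⟨ht0, ?_⟩
        by_contra hq
        push_neg at hq
        have hca : ContinuousAt (fun s => qMaj F V lam y s) t :=
          qMaj_continuousAt_snd F V hF hV lam y ht0
        have hev : {s : ℝ | 0 < qMaj F V lam y s} ∈ nhds t :=
          hca.eventually (eventually_gt_nhds hq)
        obtain ⟨s, hs1, hs2⟩ := mem_closure_iff_nhds.mp htc _ hev
        exact absurd hs2.2 (not_le.mpr hs1)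
  · intro y hy U hU hne
    have hylt : lyapDeriv F V y < 0 := lt_of_le_of_ne (hVdot y) hy
    obtain ⟨η₀, ⟨hη₀pos, hη₀q⟩, hη₀U⟩ := hne
    obtain ⟨ε, hε, hball⟩ := Metric.isOpen_iff.mp hU η₀ hη₀U
    set δ : ℝ := min (ε / 2) (η₀ / 2) with hδ
    have hδpos : 0 < δ := lt_min (by linarith) (by linarith)
    set η' : ℝ := η₀ - δ with hη'
    have hη'pos : 0 < η' := by
      have : δ ≤ η₀ / 2 := min_le_right _ _
      simp only [hη']; linarith
    have hη'lt : η' < η₀ := by simp only [hη']; linarith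
    have hη'U : η' ∈ U := by
      apply hball
      rw [Metric.mem_ball, Real.dist_eq]
      have : δ ≤ ε / 2 := min_le_left _ _
      simp only [hη']
      rw [abs_of_nonpos (by linarith)]
      linarith
    -- strict inequality at η'
    have hqlt : qMaj F V lam y η' < 0 := by
      have hM0 : 0 ≤ sSup (hessQuad F V y '' Set.Icc 0 η₀) :=
        msup_nonneg F V hF hV y hη₀pos.le
      have h1 : sSup (hessQuad F V y '' Set.Icc 0 η') ≤ sSup (hessQuad F V y '' Set.Icc 0 η₀) :=
        msup_mono F V hF hV y hη'pos.le hη'lt.le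
      have h2 : η' * (sSup (hessQuad F V y '' Set.Icc 0 η') + 1)
          < η₀ * (sSup (hessQuad F V y '' Set.Icc 0 η₀) + 1) := by
        calc η' * (sSup (hessQuad F V y '' Set.Icc 0 η') + 1)
            ≤ η' * (sSup (hessQuad F V y '' Set.Icc 0 η₀) + 1) :=
              mul_le_mul_of_nonneg_left (by linarith) hη'pos.le
          _ < η₀ * (sSup (hessQuad F V y '' Set.Icc 0 η₀) + 1) := by nlinarith
      unfold qMaj at hη₀q ⊢
      linarith
    have hca : ContinuousAt (fun z => qMaj F V lam z η') y :=
      qMaj_continuousAt_fst F V hF hV lam y hη'pos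
    refine ⟨(fun z => qMaj F V lam z η') ⁻¹' Set.Iio 0, hca (Iio_mem_nhds hqlt), ?_⟩
    intro z hz _
    exact ⟨η', ⟨hη'pos, (hz : qMaj F V lam z η' < 0).le⟩, hη'U⟩
end

section
/- Let (y_n) be the sequence generated by the LCM algorithm. If (y_n) is bounded, then (y_n) has at least one accumulation point lying in Z = {y : V̇(y) = 0}. In particular, if (y_n) converges, its limit lies in Z. -/
open Filter

/-- `f(y,η) = V(y + η F(y)) − V(y) − λ η V̇(y)`. -/
noncomputable def armijoGap {m : ℕ}
    (F : EuclideanSpace ℝ (Fin m) → EuclideanSpace ℝ (Fin m))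
    (V : EuclideanSpace ℝ (Fin m) → ℝ) (lam : ℝ)
    (y : EuclideanSpace ℝ (Fin m)) (η : ℝ) : ℝ :=
  V (y + η • F y) - V y - lam * η * lyapDeriv F V y

/-- The LCM algorithm: `y_{n+1} = y_n + η_n F(y_n)` with `η_n = f2 · η_{n-1} · f1^{-p_n}`
(convention `η_{-1} = η_init / f2`, so the trial step at stage `n = 0` starts from `η_init`),
where `p_n` is the least `k ∈ ℕ` such that `f(y_n, f2 · η_{n-1} · f1^{-k}) ≤ 0`. -/
def IsLCM {m : ℕ}
    (F : EuclideanSpace ℝ (Fin m) → EuclideanSpace ℝ (Fin m))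
    (V : EuclideanSpace ℝ (Fin m) → ℝ) (lam ηinit f1 f2 : ℝ)
    (y : ℕ → EuclideanSpace ℝ (Fin m)) (η : ℕ → ℝ) : Prop :=
  ∀ n, y (n + 1) = y n + η n • F (y n) ∧
    ∃ p : ℕ, η n = (if n = 0 then ηinit else f2 * η (n - 1)) / f1 ^ p ∧
      armijoGap F V lam (y n) (η n) ≤ 0 ∧
      ∀ k < p, ¬ armijoGap F V lam (y n) ((if n = 0 then ηinit else f2 * η (n - 1)) / f1 ^ k) ≤ 0

lemma inner_gradient_eq_fderiv {m : ℕ} (V : EuclideanSpace ℝ (Fin m) → ℝ)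
    (x v : EuclideanSpace ℝ (Fin m)) :
    (inner ℝ (gradient V x) v : ℝ) = fderiv ℝ V x v := by
  rw [gradient, ← InnerProductSpace.toDual_apply_apply,
    (InnerProductSpace.toDual ℝ _).apply_symm_apply]

theorem lcm_key
    {m : ℕ} (lam ηinit f1 f2 : ℝ)
    (hlam : lam ∈ Set.Ioo (0 : ℝ) 1) (hηinit : 0 < ηinit) (hf1 : 1 < f1) (hf2 : 1 < f2)
    (F : EuclideanSpace ℝ (Fin m) → EuclideanSpace ℝ (Fin m))
    (V : EuclideanSpace ℝ (Fin m) → ℝ)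
    (hF : Continuous F) (hV : ContDiff ℝ 2 V) (hV0 : ∀ y, 0 ≤ V y)
    (hVdot : ∀ y, lyapDeriv F V y ≤ 0)
    (y : ℕ → EuclideanSpace ℝ (Fin m)) (η : ℕ → ℝ)
    (halg : IsLCM F V lam ηinit f1 f2 y η)
    (hbdd : Bornology.IsBounded (Set.range y))
    (φ : ℕ → ℕ) (hφ : StrictMono φ) (ystar : EuclideanSpace ℝ (Fin m))
    (hconv : Tendsto (y ∘ φ) atTop (nhds ystar)) :
    lyapDeriv F V ystar = 0 := by
  obtain ⟨hlam0, hlam1⟩ := hlam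
  have hf1' : (0:ℝ) < f1 := by linarith
  have hf2' : (0:ℝ) < f2 := by linarith
  have hVdiff : Differentiable ℝ V := hV.differentiable two_ne_zero
  have hgrad : Continuous (gradient V) :=
    (InnerProductSpace.toDual ℝ _).symm.continuous.comp (hV.continuous_fderiv two_ne_zero)
  have hVdcont : Continuous (lyapDeriv F V) := by
    unfold lyapDeriv; exact hgrad.inner hF
  have hstep : ∀ n, y (n + 1) = y n + η n • F (y n) := fun n => (halg n).1
  have hgap : ∀ n, armijoGap F V lam (y n) (η n) ≤ 0 := fun n => (halg n).2.choose_spec.2.1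
  -- positivity of steps
  have hη : ∀ n, 0 < η n := by
    intro n
    induction n with
    | zero =>
      obtain ⟨p, hp, -, -⟩ := (halg 0).2
      rw [hp, if_pos rfl]
      exact div_pos hηinit (pow_pos hf1' p)
    | succ n ih =>
      obtain ⟨p, hp, -, -⟩ := (halg (n+1)).2
      rw [hp, if_neg (Nat.succ_ne_zero n), Nat.add_sub_cancel]
      exact div_pos (mul_pos hf2' ih) (pow_pos hf1' p)
  -- descent
  have hdec : ∀ n, V (y (n+1)) - V (y n) ≤ lam * η n * lyapDeriv F V (y n) := by
    intro n
    have h := hgap n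
    unfold armijoGap at h
    rw [hstep n]
    linarith
  have hnonpos : ∀ n, lam * η n * lyapDeriv F V (y n) ≤ 0 := fun n =>
    mul_nonpos_of_nonneg_of_nonpos (mul_pos hlam0 (hη n)).le (hVdot _)
  have anti : Antitone (fun n => V (y n)) :=
    antitone_nat_of_succ_le fun n => by linarith [hdec n, hnonpos n]
  have hVlim : Tendsto (fun n => V (y n)) atTop (nhds (⨅ n, V (y n))) :=
    tendsto_atTop_ciInf anti ⟨0, by rintro x ⟨n, rfl⟩; exact hV0 _⟩
  have hdiff0 : Tendsto (fun n => V (y (n+1)) - V (y n)) atTop (nhds 0) := by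
    have := (hVlim.comp (tendsto_add_atTop_nat 1)).sub hVlim
    simpa using this
  have hηVd : Tendsto (fun n => η n * lyapDeriv F V (y n)) atTop (nhds 0) := by
    have h1 : Tendsto (fun n => lam * η n * lyapDeriv F V (y n)) atTop (nhds 0) :=
      tendsto_of_tendsto_of_tendsto_of_le_of_le hdiff0 tendsto_const_nhds hdec hnonpos
    have h2 := h1.mul_const (1/lam)
    rw [zero_mul] at h2
    exact h2.congr fun n => by field_simp
  -- bound on F along the orbit
  obtain ⟨M, hM⟩ : ∃ M, ∀ n, ‖F (y n)‖ ≤ M := by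
    obtain ⟨M, hM⟩ :=
      (Metric.isCompact_of_isClosed_isBounded isClosed_closure
        hbdd.closure).exists_bound_of_continuousOn hF.continuousOn
    exact ⟨M, fun n => hM _ (subset_closure (Set.mem_range_self n))⟩
  have hM0 : 0 ≤ M := le_trans (norm_nonneg _) (hM 0)
  -- backward-chain claim
  have claim : ∀ n, η n < ηinit → ∃ j, 0 < armijoGap F V lam (y j) (f1 * η j) ∧
      η j ≤ η n ∧ ‖y j - y n‖ ≤ M / (f2 - 1) * η n := by
    intro n
    induction n with
    | zero =>
      intro hlt
      obtain ⟨p, hp, -, hmin⟩ := (halg 0).2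
      rw [if_pos rfl] at hp
      simp only [if_pos rfl, if_true, eq_self_iff_true] at hmin
      rcases p with - | q
      · rw [pow_zero, div_one] at hp
        rw [hp] at hlt; linarith
      · refine ⟨0, ?_, le_refl _, ?_⟩
        · have hfail := hmin q (Nat.lt_succ_self q)
          have heq : ηinit / f1 ^ q = f1 * η 0 := by
            rw [hp, pow_succ]; field_simp
          rw [heq] at hfail
          linarith [not_le.mp hfail]
        · rw [sub_self, norm_zero]
          exact mul_nonneg (div_nonneg hM0 (by linarith)) (hη 0).le
    | succ n ih =>
      intro hlt
      obtain ⟨p, hp, -, hmin⟩ := (halg (n+1)).2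
      rw [if_neg (Nat.succ_ne_zero n), Nat.add_sub_cancel] at hp
      simp only [Nat.succ_ne_zero, if_false, Nat.add_sub_cancel] at hmin
      rcases p with - | q
      · -- p = 0 : η (n+1) = f2 * η n
        rw [pow_zero, div_one] at hp
        have hmono : η n < η (n+1) := by nlinarith [hη n]
        have hηn : η n < ηinit := by linarith
        obtain ⟨j, h1, h2, h3⟩ := ih hηn
        refine ⟨j, h1, by linarith, ?_⟩
        have hstep' : y (n+1) - y n = η n • F (y n) := by
          rw [hstep n, add_sub_cancel_left]
        have hnorm : ‖y (n+1) - y n‖ ≤ η n * M := by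
          rw [hstep', norm_smul, Real.norm_eq_abs, abs_of_pos (hη n)]
          exact mul_le_mul_of_nonneg_left (hM n) (hη n).le
        have htri : ‖y j - y (n+1)‖ ≤ ‖y j - y n‖ + ‖y (n+1) - y n‖ := by
          calc ‖y j - y (n+1)‖ = ‖(y j - y n) - (y (n+1) - y n)‖ := by
                congr 1; abel
            _ ≤ ‖y j - y n‖ + ‖y (n+1) - y n‖ := norm_sub_le _ _
        have h21 : f2 - 1 ≠ 0 := by linarith
        have halg' : M / (f2 - 1) * η n + η n * M = M / (f2 - 1) * η (n+1) := by
          rw [hp]; field_simp; ring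
        linarith
      · -- p ≥ 1 : failure at n+1
        refine ⟨n+1, ?_, le_refl _, ?_⟩
        · have hfail := hmin q (Nat.lt_succ_self q)
          have heq : f2 * η n / f1 ^ q = f1 * η (n+1) := by
            rw [hp, pow_succ]; field_simp
          rw [heq] at hfail
          linarith [not_le.mp hfail]
        · rw [sub_self, norm_zero]
          exact mul_nonneg (div_nonneg hM0 (by linarith)) (hη _).le
  -- contradiction argument
  by_contra hne
  have hlt : lyapDeriv F V ystar < 0 := lt_of_le_of_ne (hVdot _) hne
  set c2 := lyapDeriv F V ystar / 2 with hc2def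
  have hc2 : c2 < 0 := by rw [hc2def]; linarith
  have hVdφ : Tendsto (fun k => lyapDeriv F V (y (φ k))) atTop (nhds (lyapDeriv F V ystar)) :=
    (hVdcont.tendsto ystar).comp hconv
  have hev : ∀ᶠ k in atTop, lyapDeriv F V (y (φ k)) < c2 :=
    hVdφ.eventually_lt_const (by rw [hc2def]; linarith)
  have hηφ0 : Tendsto (fun k => η (φ k)) atTop (nhds 0) := by
    have hbot : Tendsto (fun k => η (φ k) * lyapDeriv F V (y (φ k)) / c2) atTop (nhds 0) := by
      have := (hηVd.comp hφ.tendsto_atTop).div_const c2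
      simpa using this
    apply squeeze_zero' (Eventually.of_forall fun k => (hη _).le) ?_ hbot
    filter_upwards [hev] with k hk
    rw [le_div_iff_of_neg hc2]
    exact mul_le_mul_of_nonneg_left hk.le (hη _).le
  obtain ⟨N, hN⟩ := eventually_atTop.mp (hηφ0.eventually_lt_const hηinit)
  set n_ : ℕ → ℕ := fun k => φ (k + N) with hn_def
  have hlt' : ∀ k, η (n_ k) < ηinit := fun k => hN _ (Nat.le_add_left N k)
  choose j hj1 hj2 hj3 using fun k => claim (n_ k) (hlt' k)
  have hηn0 : Tendsto (fun k => η (n_ k)) atTop (nhds 0) :=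
    hηφ0.comp (tendsto_add_atTop_nat N)
  have hyn : Tendsto (fun k => y (n_ k)) atTop (nhds ystar) :=
    hconv.comp (tendsto_add_atTop_nat N)
  have hηj0 : Tendsto (fun k => η (j k)) atTop (nhds 0) :=
    squeeze_zero (fun k => (hη _).le) hj2 hηn0
  have hz : Tendsto (fun k => y (j k)) atTop (nhds ystar) := by
    rw [tendsto_iff_dist_tendsto_zero]
    apply squeeze_zero (g := fun k => M / (f2 - 1) * η (n_ k) + dist (y (n_ k)) ystar)
      (fun k => dist_nonneg) ?_ ?_
    · intro k
      calc dist (y (j k)) ystar ≤ dist (y (j k)) (y (n_ k)) + dist (y (n_ k)) ystar :=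
            dist_triangle _ _ _
        _ ≤ _ := by rw [dist_eq_norm]; exact add_le_add_left (hj3 k) _
    · have h1 : Tendsto (fun k => M / (f2 - 1) * η (n_ k)) atTop (nhds 0) := by
        simpa using hηn0.const_mul (M / (f2 - 1))
      have h2 : Tendsto (fun k => dist (y (n_ k)) ystar) atTop (nhds 0) :=
        tendsto_iff_dist_tendsto_zero.mp hyn
      simpa using h1.add h2
  -- mean value theorem at each failure point
  have mvt : ∀ k, ∃ ξ, ‖ξ - y (j k)‖ ≤ f1 * η (j k) * M ∧
      lam * lyapDeriv F V (y (j k)) ≤ (inner ℝ (gradient V ξ) (F (y (j k))) : ℝ) := by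
    intro k
    set z := y (j k) with hzdef
    set s := f1 * η (j k) with hsdef
    have hs : 0 < s := mul_pos hf1' (hη _)
    set w := s • F z with hwdef
    set g : ℝ → ℝ := fun t => V (z + t • w) with hgdef
    have hderiv : ∀ t : ℝ, HasDerivAt g (fderiv ℝ V (z + t • w) w) t := by
      intro t
      have hline : HasDerivAt (fun t : ℝ => z + t • w) w t := by
        simpa using ((hasDerivAt_id t).smul_const w).const_add z
      exact ((hVdiff (z + t • w)).hasFDerivAt).comp_hasDerivAt t hline
    obtain ⟨c, hc, heq⟩ := exists_hasDerivAt_eq_slope g _ one_pos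
      (fun t _ => (hderiv t).continuousAt.continuousWithinAt) (fun t _ => hderiv t)
    refine ⟨z + c • w, ?_, ?_⟩
    · rw [add_sub_cancel_left, norm_smul, hwdef, norm_smul, Real.norm_eq_abs,
        Real.norm_eq_abs, abs_of_pos hs]
      have hc1 : |c| ≤ 1 := abs_le.mpr ⟨by linarith [hc.1], hc.2.le⟩
      calc |c| * (s * ‖F z‖) ≤ 1 * (s * ‖F z‖) :=
            mul_le_mul_of_nonneg_right hc1 (by positivity)
        _ = s * ‖F z‖ := one_mul _
        _ ≤ s * M := mul_le_mul_of_nonneg_left (hM _) hs.le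
    · have hfail := hj1 k
      unfold armijoGap at hfail
      rw [← hzdef, ← hsdef] at hfail
      have hg1 : g 1 = V (z + s • F z) := by rw [hgdef]; simp [hwdef]
      have hg0 : g 0 = V z := by rw [hgdef]; simp
      have hslope : fderiv ℝ V (z + c • w) w = g 1 - g 0 := by
        rw [heq]; norm_num
      have h2 : (inner ℝ (gradient V (z + c • w)) (F z) : ℝ) * s = g 1 - g 0 := by
        rw [← hslope, ← inner_gradient_eq_fderiv, hwdef, real_inner_smul_right]
        ring
      have hA : lam * s * lyapDeriv F V z < g 1 - g 0 := by
        rw [hg1, hg0]; linarith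
      have hB : (lam * lyapDeriv F V z) * s ≤ (inner ℝ (gradient V (z + c • w)) (F z) : ℝ) * s := by
        nlinarith [hA, h2]
      exact le_of_mul_le_mul_right hB hs
  choose ξ hξ1 hξ2 using mvt
  have hξlim : Tendsto ξ atTop (nhds ystar) := by
    rw [tendsto_iff_dist_tendsto_zero]
    apply squeeze_zero (g := fun k => f1 * η (j k) * M + dist (y (j k)) ystar)
      (fun k => dist_nonneg) ?_ ?_
    · intro k
      calc dist (ξ k) ystar ≤ dist (ξ k) (y (j k)) + dist (y (j k)) ystar := dist_triangle _ _ _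
        _ ≤ _ := add_le_add_left (by rw [dist_eq_norm]; exact hξ1 k) _
    · have h1 : Tendsto (fun k => f1 * η (j k) * M) atTop (nhds 0) := by
        have := (hηj0.const_mul f1).mul_const M
        simpa using this
      have h2 := tendsto_iff_dist_tendsto_zero.mp hz
      simpa using h1.add h2
  have hL : Tendsto (fun k => lam * lyapDeriv F V (y (j k))) atTop
      (nhds (lam * lyapDeriv F V ystar)) :=
    ((hVdcont.tendsto ystar).comp hz).const_mul lam
  have hR : Tendsto (fun k => (inner ℝ (gradient V (ξ k)) (F (y (j k))) : ℝ)) atTop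
      (nhds (lyapDeriv F V ystar)) := by
    unfold lyapDeriv
    exact Filter.Tendsto.inner (𝕜 := ℝ) ((hgrad.tendsto ystar).comp hξlim)
      ((hF.tendsto ystar).comp hz)
  have hfin : lam * lyapDeriv F V ystar ≤ lyapDeriv F V ystar :=
    le_of_tendsto_of_tendsto' hL hR hξ2
  nlinarith [mul_pos (sub_pos.mpr hlam1) (neg_pos.mpr hlt)]

/-- **LCM limit point.** If the sequence generated by LCM is bounded, it has at least one
accumulation point lying in `Z = {y | V̇(y) = 0}`; in particular, if it converges, its limit
lies in `Z`. -/
theorem lcm_has_accumulation_point_in_Z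
    {m : ℕ} (lam ηinit f1 f2 : ℝ)
    (hlam : lam ∈ Set.Ioo (0 : ℝ) 1) (hηinit : 0 < ηinit) (hf1 : 1 < f1) (hf2 : 1 < f2)
    (F : EuclideanSpace ℝ (Fin m) → EuclideanSpace ℝ (Fin m))
    (V : EuclideanSpace ℝ (Fin m) → ℝ)
    (hF : Continuous F) (hV : ContDiff ℝ 2 V) (hV0 : ∀ y, 0 ≤ V y)
    (hVdot : ∀ y, lyapDeriv F V y ≤ 0)
    (y : ℕ → EuclideanSpace ℝ (Fin m)) (η : ℕ → ℝ)
    (halg : IsLCM F V lam ηinit f1 f2 y η)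
    (hbdd : Bornology.IsBounded (Set.range y)) :
    (∃ ystar : EuclideanSpace ℝ (Fin m),
      lyapDeriv F V ystar = 0 ∧
      ∃ φ : ℕ → ℕ, StrictMono φ ∧ Tendsto (y ∘ φ) atTop (nhds ystar)) ∧
    (∀ l : EuclideanSpace ℝ (Fin m), Tendsto y atTop (nhds l) → lyapDeriv F V l = 0) := by
  have key : ∀ (φ : ℕ → ℕ) (ystar : EuclideanSpace ℝ (Fin m)), StrictMono φ →
      Tendsto (y ∘ φ) atTop (nhds ystar) → lyapDeriv F V ystar = 0 := fun φ ystar hφ hc =>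
    lcm_key lam ηinit f1 f2 hlam hηinit hf1 hf2 F V hF hV hV0 hVdot y η halg hbdd φ hφ ystar hc
  constructor
  · obtain ⟨ystar, -, φ, hφ, hconv⟩ :=
      (Metric.isCompact_of_isClosed_isBounded isClosed_closure hbdd.closure).tendsto_subseq
        (fun n => subset_closure (Set.mem_range_self n))
    exact ⟨ystar, key φ ystar hφ hconv, φ, hφ, hconv⟩
  · intro l hl
    exact key id l strictMono_id hl
end

section
/- Assume V is radially unbounded, that V is KL at every one of its critical points, and that for all y ∈ ℝ^m, V̇(y) = 0 implies ∇V(y) = 0. Let G_V be the set of global minima of V. Then G_V is attractive for the LCR and LCM algorithms: there exists γ > 0 such that for any sequence (y_n) generated by LCR or LCM, if dist(y_0, G_V) < γ then dist(y_n, G_V) → 0 as n → ∞. -/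
open Filter

/-- The LCR algorithm. -/
def IsLCR {m : ℕ}
    (F : EuclideanSpace ℝ (Fin m) → EuclideanSpace ℝ (Fin m))
    (V : EuclideanSpace ℝ (Fin m) → ℝ) (lam ηinit f1 : ℝ)
    (y : ℕ → EuclideanSpace ℝ (Fin m)) (η : ℕ → ℝ) : Prop :=
  ∀ n, y (n + 1) = y n + η n • F (y n) ∧
    ∃ p : ℕ, η n = ηinit / f1 ^ p ∧
      armijoGap F V lam (y n) (η n) ≤ 0 ∧
      ∀ k < p, ¬ armijoGap F V lam (y n) (ηinit / f1 ^ k) ≤ 0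

/-- `g` satisfies the Kurdyka–Łojasiewicz inequality at the critical point `ystar`. -/
def IsKLAt {m : ℕ} (g : EuclideanSpace ℝ (Fin m) → ℝ)
    (ystar : EuclideanSpace ℝ (Fin m)) : Prop :=
  ∃ γ' : ℝ, 0 < γ' ∧ ∃ 𝒱 ∈ nhds ystar, ∃ φ φ' : ℝ → ℝ,
    ContinuousOn φ (Set.Icc 0 γ') ∧ (∀ x ∈ Set.Icc 0 γ', 0 ≤ φ x) ∧
    ConcaveOn ℝ (Set.Icc 0 γ') φ ∧ φ 0 = 0 ∧
    (∀ x ∈ Set.Ioo 0 γ', HasDerivAt φ (φ' x) x) ∧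
    ContinuousOn φ' (Set.Ioo 0 γ') ∧
    (∀ x ∈ Set.Ioo 0 γ', 0 < φ' x) ∧
    ∀ y ∈ 𝒱, g ystar < g y → g y < g ystar + γ' →
      1 ≤ φ' (g y - g ystar) * ‖gradient g y‖

section Helpers
variable {m : ℕ}
local notation "E" => EuclideanSpace ℝ (Fin m)

theorem grad_cont' (V : E → ℝ) (hV : ContDiff ℝ 2 V) : Continuous (gradient V) := by
  have h1 : Continuous (fderiv ℝ V) := hV.continuous_fderiv (by norm_num)
  exact (InnerProductSpace.toDual ℝ E).symm.continuous.comp h1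

theorem hgrad_zero_of_min (V : E → ℝ) (p : E)
    (hp : ∀ z : E, V p ≤ V z) : gradient V p = 0 := by
  have hloc : IsLocalMin V p := Filter.Eventually.of_forall hp
  have hfz : fderiv ℝ V p = 0 := hloc.fderiv_eq_zero
  rw [gradient, hfz, map_zero]

theorem hasDerivAt_line' (V : E → ℝ) (hV : ContDiff ℝ 2 V) (y w : E) (t : ℝ) :
    HasDerivAt (fun s : ℝ => V (y + s • w)) (inner ℝ (gradient V (y + t • w)) w : ℝ) t := by
  have hdV : DifferentiableAt ℝ V (y + t • w) := (hV.differentiable (by norm_num)).differentiableAt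
  have hg := hdV.hasGradientAt.hasFDerivAt
  have hc : HasDerivAt (fun s : ℝ => y + s • w) w t := by
    simpa using ((hasDerivAt_id t).smul_const w).const_add y
  have := hg.comp_hasDerivAt t hc
  simpa [InnerProductSpace.toDual_apply_apply, Function.comp_def] using this

theorem mvt_le' {g g' : ℝ → ℝ} {K : ℝ} (hd : ∀ t, HasDerivAt g (g' t) t)
    (hb : ∀ t ∈ Set.Icc (0:ℝ) 1, g' t ≤ K) : g 1 - g 0 ≤ K := by
  set f : ℝ → ℝ := fun t => g t - K * t with hf
  have hfd : ∀ t : ℝ, HasDerivAt f (g' t - K) t := by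
    intro t
    have := (hd t).sub ((hasDerivAt_id t).const_mul K)
    simp only [mul_one] at this
    exact this
  have hanti : AntitoneOn f (Set.Icc 0 1) := by
    apply antitoneOn_of_deriv_nonpos (convex_Icc 0 1)
    · exact fun t _ => ((hfd t).continuousAt).continuousWithinAt
    · exact fun t _ => ((hfd t).differentiableAt).differentiableWithinAt
    · intro t ht
      rw [interior_Icc] at ht
      rw [(hfd t).deriv]
      have := hb t (Set.mem_Icc_of_Ioo ht)
      linarith
  have := hanti (Set.mem_Icc.2 ⟨le_refl 0, zero_le_one⟩)
    (Set.mem_Icc.2 ⟨zero_le_one, le_refl 1⟩) zero_le_one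
  simp only [hf] at this
  linarith

theorem uniform_armijo' (F : E → E) (V : E → ℝ) (lam : ℝ) (hlam : lam ∈ Set.Ioo (0:ℝ) 1)
    (hF : Continuous F) (hV : ContDiff ℝ 2 V)
    (A : Set E) (hA : IsCompact A) (ρ : ℝ) (hρ : 0 < ρ)
    (hAV : ∀ z ∈ A, lyapDeriv F V z ≤ -ρ) :
    ∃ e > 0, ∀ z ∈ A, ∀ h : ℝ, 0 < h → h ≤ e → armijoGap F V lam z h ≤ 0 := by
  obtain ⟨C, hC⟩ := hA.exists_bound_of_continuousOn hF.continuousOn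
  set B : ℝ := max C 1 with hB
  have hB1 : (1:ℝ) ≤ B := le_max_right _ _
  have hB0 : (0:ℝ) < B := lt_of_lt_of_le one_pos hB1
  have hFB : ∀ z ∈ A, ‖F z‖ ≤ B := fun z hz => (hC z hz).trans (le_max_left _ _)
  set A₁ : Set E := Metric.cthickening B A with hA₁
  have hA₁c : IsCompact A₁ := hA.cthickening
  set Ψ : E × E → ℝ := fun p => inner ℝ (gradient V p.2) (F p.1) with hΨ
  have hΨc : Continuous Ψ :=
    Continuous.inner ((grad_cont' V hV).comp continuous_snd) (hF.comp continuous_fst)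
  set D : Set (E × E) := A ×ˢ A₁ with hD
  have hDc : IsCompact D := hA.prod hA₁c
  have huc : UniformContinuousOn Ψ D := hDc.uniformContinuousOn_of_continuous hΨc.continuousOn
  have hε : (0:ℝ) < (1 - lam) * ρ := mul_pos (by linarith [hlam.2]) hρ
  obtain ⟨r, hr, hrr⟩ := Metric.uniformContinuousOn_iff.1 huc ((1 - lam) * ρ) hε
  refine ⟨min 1 (r / (2 * B)), lt_min one_pos (by positivity), ?_⟩
  intro z hz h hh0 hhe
  have hh1 : h ≤ 1 := hhe.trans (min_le_left _ _)
  have hhr : h ≤ r / (2 * B) := hhe.trans (min_le_right _ _)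
  set w : E := h • F z with hw
  have hseg : ∀ t ∈ Set.Icc (0:ℝ) 1,
      (inner ℝ (gradient V (z + t • w)) (F z) : ℝ) ≤ lam * lyapDeriv F V z := by
    intro t ht
    have hdist : dist (z + t • w) z ≤ h * B := by
      rw [dist_eq_norm]
      have : z + t • w - z = t • w := by abel
      rw [this, norm_smul, hw, norm_smul]
      have h1 : ‖t‖ ≤ 1 := by rw [Real.norm_eq_abs, abs_le]; constructor <;> linarith [ht.1, ht.2]
      have h2 : ‖h‖ = h := by rw [Real.norm_eq_abs, abs_of_pos hh0]
      calc ‖t‖ * (‖h‖ * ‖F z‖) ≤ 1 * (‖h‖ * ‖F z‖) := by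
            apply mul_le_mul_of_nonneg_right h1; positivity
        _ = h * ‖F z‖ := by rw [one_mul, h2]
        _ ≤ h * B := by apply mul_le_mul_of_nonneg_left (hFB z hz) hh0.le
    have hmem : z + t • w ∈ A₁ := by
      apply Metric.mem_cthickening_of_dist_le _ z B _ hz
      calc dist (z + t • w) z ≤ h * B := hdist
        _ ≤ 1 * B := by apply mul_le_mul_of_nonneg_right hh1 hB0.le
        _ = B := one_mul B
    have hmemD : (z, z + t • w) ∈ D := Set.mk_mem_prod hz hmem
    have hmemD' : (z, z) ∈ D := Set.mk_mem_prod hz (Metric.self_subset_cthickening A hz)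
    have hdd : dist ((z, z + t • w) : E × E) (z, z) < r := by
      rw [Prod.dist_eq]
      simp only [dist_self]
      have h3 : h * B ≤ r / 2 := by
        calc h * B ≤ (r / (2 * B)) * B := mul_le_mul_of_nonneg_right hhr hB0.le
          _ = r / 2 := by field_simp
      have hlt : dist (z + t • w) z < r := lt_of_le_of_lt (hdist.trans h3) (by linarith)
      exact max_lt hr hlt
    have hd2 := hrr _ hmemD _ hmemD' hdd
    rw [Real.dist_eq] at hd2
    have habs := abs_lt.1 hd2
    have hVz := hAV z hz
    have h1 : (inner ℝ (gradient V (z + t • w)) (F z) : ℝ) <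
        lyapDeriv F V z + (1 - lam) * ρ := by
      have e1 : Ψ (z, z + t • w) = (inner ℝ (gradient V (z + t • w)) (F z) : ℝ) := rfl
      have e2 : Ψ (z, z) = lyapDeriv F V z := rfl
      have h2 := habs.2
      rw [e1, e2] at h2
      linarith
    calc (inner ℝ (gradient V (z + t • w)) (F z) : ℝ) ≤ lyapDeriv F V z + (1 - lam) * ρ := h1.le
      _ ≤ lyapDeriv F V z + (1 - lam) * (-(lyapDeriv F V z)) := by
          apply add_le_add_right
          apply mul_le_mul_of_nonneg_left (by linarith) (by linarith [hlam.2])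
      _ = lam * lyapDeriv F V z := by ring
  have hg : ∀ t : ℝ, HasDerivAt (fun s : ℝ => V (z + s • w))
      (inner ℝ (gradient V (z + t • w)) w : ℝ) t := hasDerivAt_line' V hV z w
  have hgb : ∀ t ∈ Set.Icc (0:ℝ) 1,
      (inner ℝ (gradient V (z + t • w)) w : ℝ) ≤ h * (lam * lyapDeriv F V z) := by
    intro t ht
    have he : (inner ℝ (gradient V (z + t • w)) w : ℝ) =
        h * inner ℝ (gradient V (z + t • w)) (F z) := by
      rw [hw, real_inner_smul_right]
    rw [he]
    exact mul_le_mul_of_nonneg_left (hseg t ht) hh0.le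
  have hmvt := mvt_le' hg hgb
  simp only [one_smul, zero_smul, add_zero] at hmvt
  unfold armijoGap
  have hzw : z + h • F z = z + w := rfl
  rw [hzw]
  linarith [hmvt]
end Helpers

/-- **Attractivity of the set of global minima.** If `V` is radially unbounded, KL at every
one of its critical points, and `V̇(y) = 0` implies `∇V(y) = 0`, then the set `G_V` of global
minima of `V` is attractive for the LCR and LCM algorithms. -/
theorem global_minima_attractive
    {m : ℕ} (lam ηinit f1 f2 : ℝ)
    (hlam : lam ∈ Set.Ioo (0 : ℝ) 1) (hηinit : 0 < ηinit) (hf1 : 1 < f1) (hf2 : 1 < f2)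
    (F : EuclideanSpace ℝ (Fin m) → EuclideanSpace ℝ (Fin m))
    (V : EuclideanSpace ℝ (Fin m) → ℝ)
    (hF : Continuous F) (hV : ContDiff ℝ 2 V) (hV0 : ∀ y, 0 ≤ V y)
    (hVdot : ∀ y, lyapDeriv F V y ≤ 0)
    (hrad : ∀ C : ℝ, ∃ Rr : ℝ, ∀ y : EuclideanSpace ℝ (Fin m), Rr ≤ ‖y‖ → C ≤ V y)
    (hKL : ∀ ystar, gradient V ystar = 0 → IsKLAt V ystar)
    (hZ : ∀ y, lyapDeriv F V y = 0 → gradient V y = 0)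
    (G : Set (EuclideanSpace ℝ (Fin m)))
    (hG : G = {ystar | ∀ y, V ystar ≤ V y}) (hGne : G.Nonempty) :
    ∃ γ > 0, ∀ (y : ℕ → EuclideanSpace ℝ (Fin m)) (η : ℕ → ℝ),
      (IsLCR F V lam ηinit f1 y η ∨ IsLCM F V lam ηinit f1 f2 y η) →
      Metric.infDist (y 0) G < γ →
      Tendsto (fun n => Metric.infDist (y n) G) atTop (nhds 0) := by
  have hf10 : (0:ℝ) < f1 := lt_trans one_pos hf1
  have hf20 : (0:ℝ) < f2 := lt_trans one_pos hf2
  have hVcont : Continuous V := hV.continuous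
  obtain ⟨ystar, hystar⟩ := hGne
  have hGmin : ∀ z, V ystar ≤ V z := by rw [hG] at hystar; exact hystar
  set Vs : ℝ := V ystar with hVs
  have hGset : ∀ z, z ∈ G ↔ V z = Vs := by
    intro z
    rw [hG]
    constructor
    · intro hz; exact le_antisymm (hz ystar) (hGmin z)
    · intro hz w; rw [hz]; exact hGmin w
  -- compactness of sublevel sets
  have hsubc : ∀ c : ℝ, IsCompact {z : EuclideanSpace ℝ (Fin m) | V z ≤ c} := by
    intro c
    obtain ⟨R, hR⟩ := hrad (c + 1)
    have hclosed : IsClosed {z : EuclideanSpace ℝ (Fin m) | V z ≤ c} :=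
      isClosed_le hVcont continuous_const
    refine (isCompact_closedBall (0 : EuclideanSpace ℝ (Fin m)) (max R 0)).of_isClosed_subset
      hclosed ?_
    intro z hz
    rw [Metric.mem_closedBall, dist_zero_right]
    by_contra hc
    push_neg at hc
    have : c + 1 ≤ V z := hR z (le_trans (le_max_left R 0) hc.le)
    have : V z ≤ c := hz
    linarith
  have hGclosed : IsClosed G := by
    have : G = {z : EuclideanSpace ℝ (Fin m) | V z = Vs} := Set.ext hGset
    rw [this]
    exact isClosed_eq hVcont continuous_const
  have hGcompact : IsCompact G :=
    (hsubc Vs).of_isClosed_subset hGclosed (fun z hz => le_of_eq ((hGset z).1 hz))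
  -- KL neighborhoods around points of G
  have key : ∀ i : {p : EuclideanSpace ℝ (Fin m) // p ∈ G},
      ∃ O : Set (EuclideanSpace ℝ (Fin m)), IsOpen O ∧ i.1 ∈ O ∧ ∃ g : ℝ, 0 < g ∧
        ∀ z ∈ O, V z < Vs + g → gradient V z = 0 → V z = Vs := by
    rintro ⟨p, hp⟩
    have hVp : V p = Vs := (hGset p).1 hp
    have hgradp : gradient V p = 0 :=
      hgrad_zero_of_min V p (by intro z; rw [hVp]; exact (hVp ▸ hGmin z))
    obtain ⟨γ', hγ'pos, 𝒱, h𝒱, φ, φ', _, _, _, _, _, _, _, hineq⟩ := hKL p hgradp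
    obtain ⟨O, hO𝒱, hOopen, hpO⟩ := mem_nhds_iff.1 h𝒱
    refine ⟨O, hOopen, hpO, γ', hγ'pos, ?_⟩
    intro z hz hlt h0
    by_contra hne
    have h1 : Vs < V z := lt_of_le_of_ne (hGmin z) (Ne.symm hne)
    have h2 := hineq z (hO𝒱 hz) (hVp ▸ h1) (hVp ▸ hlt)
    rw [h0, norm_zero, mul_zero] at h2
    linarith
  choose O hOopen hOmem g hgpos hOprop using key
  have hcov : G ⊆ ⋃ i : {p : EuclideanSpace ℝ (Fin m) // p ∈ G}, O i :=
    fun p hp => Set.mem_iUnion.2 ⟨⟨p, hp⟩, hOmem ⟨p, hp⟩⟩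
  obtain ⟨t, ht⟩ := hGcompact.elim_finite_subcover O hOopen hcov
  have htne : t.Nonempty := by
    have := ht hystar
    obtain ⟨i, hi, -⟩ := Set.mem_iUnion₂.1 this
    exact ⟨i, hi⟩
  set γ₀ : ℝ := (t.image g).min' (htne.image _) with hγ₀
  have hγ₀pos : 0 < γ₀ := by
    obtain ⟨x, hx, hxe⟩ := Finset.mem_image.1 ((t.image g).min'_mem (htne.image _))
    calc (0:ℝ) < g x := hgpos x
      _ = γ₀ := hxe
  have hγ₀le : ∀ i ∈ t, γ₀ ≤ g i := fun i hi =>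
    Finset.min'_le _ _ (Finset.mem_image_of_mem _ hi)
  set U : Set (EuclideanSpace ℝ (Fin m)) := ⋃ i ∈ t, O i with hU
  have hUopen : IsOpen U := isOpen_biUnion (fun i _ => hOopen i)
  have hGU : G ⊆ U := ht
  have hUcrit : ∀ z ∈ U, V z < Vs + γ₀ → gradient V z = 0 → V z = Vs := by
    intro z hz hlt h0
    obtain ⟨i, hi, hzO⟩ := Set.mem_iUnion₂.1 hz
    exact hOprop i z hzO (lt_of_lt_of_le hlt (by linarith [hγ₀le i hi])) h0
  -- choose δ with sublevel trap inside U
  have hδex : ∃ δ : ℝ, 0 < δ ∧ δ ≤ γ₀ / 2 ∧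
      ∀ z : EuclideanSpace ℝ (Fin m), V z ≤ Vs + δ → z ∈ U := by
    set W : Set (EuclideanSpace ℝ (Fin m)) := {z | V z ≤ Vs + γ₀ / 2} \ U with hW
    have hWc : IsCompact W := (hsubc (Vs + γ₀ / 2)).diff hUopen
    rcases W.eq_empty_or_nonempty with hWe | hWne
    · refine ⟨γ₀ / 2, by linarith, le_refl _, ?_⟩
      intro z hz
      by_contra hzU
      have : z ∈ W := ⟨hz, hzU⟩
      rw [hWe] at this
      exact this
    · obtain ⟨w₀, hw₀W, hw₀min⟩ := hWc.exists_isMinOn hWne hVcont.continuousOn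
      have hw₀G : w₀ ∉ G := fun hc => hw₀W.2 (hGU hc)
      have hμ : Vs < V w₀ :=
        lt_of_le_of_ne (hGmin w₀) (fun hc => hw₀G ((hGset w₀).2 hc.symm))
      refine ⟨min (γ₀ / 2) ((V w₀ - Vs) / 2), lt_min (by linarith) (by linarith),
        min_le_left _ _, ?_⟩
      intro z hz
      by_contra hzU
      have hz1 : V z ≤ Vs + γ₀ / 2 := le_trans hz (by linarith [min_le_left (γ₀ / 2) ((V w₀ - Vs) / 2)])
      have hzW : z ∈ W := ⟨hz1, hzU⟩
      have := isMinOn_iff.1 hw₀min z hzW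
      have hz2 : V z ≤ Vs + (V w₀ - Vs) / 2 :=
        le_trans hz (by linarith [min_le_right (γ₀ / 2) ((V w₀ - Vs) / 2)])
      linarith
  obtain ⟨δ, hδpos, hδγ, hδU⟩ := hδex
  -- choose γ via thickening
  have hWopen : IsOpen {z : EuclideanSpace ℝ (Fin m) | V z < Vs + δ} :=
    isOpen_lt hVcont continuous_const
  have hGW : G ⊆ {z : EuclideanSpace ℝ (Fin m) | V z < Vs + δ} := by
    intro z hz
    have := (hGset z).1 hz
    simp only [Set.mem_setOf_eq, this]
    linarith
  obtain ⟨γ, hγpos, hγsub⟩ := hGcompact.exists_thickening_subset_open hWopen hGW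
  refine ⟨γ, hγpos, ?_⟩
  intro y η halg hd0
  -- basic sequence facts
  have hηpos : ∀ n, 0 < η n := by
    rcases halg with h | h
    · intro n
      obtain ⟨-, p, hp, -, -⟩ := h n
      rw [hp]
      exact div_pos hηinit (pow_pos hf10 p)
    · intro n
      induction n using Nat.strong_induction_on with
      | _ n ih =>
        obtain ⟨-, p, hp, -, -⟩ := h n
        rw [hp]
        rcases Nat.eq_zero_or_pos n with rfl | hn
        · rw [if_pos rfl]
          exact div_pos hηinit (pow_pos hf10 p)
        · rw [if_neg hn.ne']
          exact div_pos (mul_pos hf20 (ih (n - 1) (Nat.sub_lt hn one_pos))) (pow_pos hf10 p)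
  have hstep : ∀ n, y (n + 1) = y n + η n • F (y n) := by
    rcases halg with h | h <;> exact fun n => (h n).1
  have harm : ∀ n, armijoGap F V lam (y n) (η n) ≤ 0 := by
    rcases halg with h | h <;> exact fun n => (h n).2.choose_spec.2.1
  have hdec : ∀ n, V (y (n + 1)) ≤ V (y n) := by
    intro n
    have h1 := harm n
    unfold armijoGap at h1
    rw [hstep n]
    have h2 : lam * η n * lyapDeriv F V (y n) ≤ 0 :=
      mul_nonpos_of_nonneg_of_nonpos (mul_pos hlam.1 (hηpos n)).le (hVdot (y n))
    linarith
  have hanti : Antitone (fun n => V (y n)) := antitone_nat_of_succ_le hdec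
  have hy0S : V (y 0) < Vs + δ := by
    have h1 : y 0 ∈ Metric.thickening γ G :=
      (Metric.mem_thickening_iff_infDist_lt ⟨ystar, hystar⟩).2 hd0
    exact hγsub h1
  have hS : ∀ n, V (y n) ≤ Vs + δ := fun n =>
    le_trans (hanti (Nat.zero_le n)) hy0S.le
  have hlb : ∀ n, Vs ≤ V (y n) := fun n => hGmin (y n)
  set c : ℝ := ⨅ n, V (y n) with hc
  have hbdd : BddBelow (Set.range fun n => V (y n)) := by
    refine ⟨Vs, ?_⟩
    rintro x ⟨n, rfl⟩
    exact hlb n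
  have htendV : Tendsto (fun n => V (y n)) atTop (nhds c) := tendsto_atTop_ciInf hanti hbdd
  have hcge : Vs ≤ c := le_ciInf hlb
  have hcle : ∀ n, c ≤ V (y n) := fun n => ciInf_le hbdd n
  -- the key claim: c = Vs
  have hcVs : c = Vs := by
    by_contra hne
    have hcgt : Vs < c := lt_of_le_of_ne hcge (Ne.symm hne)
    set A : Set (EuclideanSpace ℝ (Fin m)) :=
      {z | V z ≤ Vs + δ} ∩ {z | c ≤ V z} with hA
    have hAc : IsCompact A :=
      (hsubc (Vs + δ)).inter_right (isClosed_le continuous_const hVcont)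
    have hyA : ∀ n, y n ∈ A := fun n => ⟨hS n, hcle n⟩
    have hAne : A.Nonempty := ⟨y 0, hyA 0⟩
    have hAneg : ∀ z ∈ A, lyapDeriv F V z < 0 := by
      intro z hz
      rcases lt_or_eq_of_le (hVdot z) with h | h
      · exact h
      · exfalso
        have hgrad : gradient V z = 0 := hZ z h
        have hzU : z ∈ U := hδU z hz.1
        have hzlt : V z < Vs + γ₀ := lt_of_le_of_lt hz.1 (by linarith)
        have hh1 := hUcrit z hzU hzlt hgrad
        have hh2 : c ≤ V z := hz.2
        linarith
    have hlyapcont : Continuous (lyapDeriv F V) :=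
      Continuous.inner (grad_cont' V hV) hF
    obtain ⟨z₀, hz₀A, hz₀max⟩ := hAc.exists_isMaxOn hAne hlyapcont.continuousOn
    set ρ : ℝ := -(lyapDeriv F V z₀) with hρdef
    have hρ : 0 < ρ := neg_pos.2 (hAneg z₀ hz₀A)
    have hAV : ∀ z ∈ A, lyapDeriv F V z ≤ -ρ := by
      intro z hz
      have := isMaxOn_iff.1 hz₀max z hz
      rw [hρdef]; linarith
    obtain ⟨e, he, hearm⟩ := uniform_armijo' F V lam hlam hF hV A hAc ρ hρ hAV
    -- η → 0
    have hstepb : ∀ n, lam * η n * ρ ≤ V (y n) - V (y (n + 1)) := by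
      intro n
      have h1 := harm n
      unfold armijoGap at h1
      rw [hstep n]
      have h2 : lyapDeriv F V (y n) ≤ -ρ := hAV (y n) (hyA n)
      have h3 : lam * η n * lyapDeriv F V (y n) ≤ lam * η n * (-ρ) :=
        mul_le_mul_of_nonneg_left h2 (mul_pos hlam.1 (hηpos n)).le
      nlinarith
    have hdiffT : Tendsto (fun n => (V (y n) - V (y (n + 1))) / (lam * ρ)) atTop (nhds 0) := by
      have h1 : Tendsto (fun n => V (y (n + 1))) atTop (nhds c) :=
        htendV.comp (tendsto_add_atTop_nat 1)
      have h2 : Tendsto (fun n => V (y n) - V (y (n + 1))) atTop (nhds 0) := by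
        have := htendV.sub h1
        simpa using this
      simpa using h2.div_const (lam * ρ)
    have hηle : ∀ n, η n ≤ (V (y n) - V (y (n + 1))) / (lam * ρ) := by
      intro n
      have hlr : 0 < lam * ρ := mul_pos hlam.1 hρ
      rw [le_div_iff₀ hlr]
      have heq : η n * (lam * ρ) = lam * η n * ρ := by ring
      rw [heq]
      exact hstepb n
    have htendη : Tendsto η atTop (nhds 0) :=
      squeeze_zero (fun n => (hηpos n).le) hηle hdiffT
    -- lower bound on η
    set β : ℝ := min ηinit (e / f1) with hβdef
    have hβ : 0 < β := lt_min hηinit (by positivity)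
    have hkey : ∀ n (b : ℝ), 0 < b →
        (∃ p : ℕ, η n = b / f1 ^ p ∧
          ∀ k < p, ¬ armijoGap F V lam (y n) (b / f1 ^ k) ≤ 0) →
        b ≤ η n ∨ e / f1 < η n := by
      intro n b hb ⟨p, hp, hfail⟩
      cases p with
      | zero =>
        left
        rw [hp, pow_zero, div_one]
      | succ q =>
        right
        have hf := hfail q (Nat.lt_succ_self q)
        have hu : e < b / f1 ^ q := by
          by_contra hle
          push_neg at hle
          exact hf (hearm (y n) (hyA n) (b / f1 ^ q) (div_pos hb (pow_pos hf10 q)) hle)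
        have heq : η n = (b / f1 ^ q) / f1 := by
          rw [hp, pow_succ, div_div]
        rw [heq]
        exact div_lt_div_of_pos_right hu hf10
    have hηlb : ∀ n, β ≤ η n := by
      rcases halg with h | h
      · intro n
        obtain ⟨-, p, hp, -, hfail⟩ := h n
        rcases hkey n ηinit hηinit ⟨p, hp, hfail⟩ with h1 | h1
        · exact le_trans (min_le_left _ _) h1
        · exact le_trans (min_le_right _ _) h1.le
      · intro n
        induction n using Nat.strong_induction_on with
        | _ n ih =>
          obtain ⟨-, p, hp, -, hfail⟩ := h n
          rcases Nat.eq_zero_or_pos n with rfl | hn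
          · rw [if_pos rfl] at hp hfail
            rcases hkey 0 ηinit hηinit ⟨p, hp, hfail⟩ with h1 | h1
            · exact le_trans (min_le_left _ _) h1
            · exact le_trans (min_le_right _ _) h1.le
          · rw [if_neg hn.ne'] at hp hfail
            have hb : 0 < f2 * η (n - 1) := mul_pos hf20 (hηpos (n - 1))
            rcases hkey n (f2 * η (n - 1)) hb ⟨p, hp, hfail⟩ with h1 | h1
            · have h2 : β ≤ η (n - 1) := ih (n - 1) (Nat.sub_lt hn one_pos)
              have h3 : η (n - 1) ≤ f2 * η (n - 1) :=
                le_mul_of_one_le_left (hηpos (n - 1)).le hf2.le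
              linarith
            · exact le_trans (min_le_right _ _) h1.le
    have hev : ∀ᶠ n in atTop, η n < β := htendη.eventually_lt_const hβ
    obtain ⟨N, hN⟩ := hev.exists
    linarith [hηlb N]
  -- conclude: V (y n) → Vs, hence infDist → 0
  rw [hcVs] at htendV
  rw [Metric.tendsto_atTop]
  intro ε hε
  have hgoal : ∃ N, ∀ n ≥ N, Metric.infDist (y n) G < ε := by
    set K : Set (EuclideanSpace ℝ (Fin m)) :=
      {z | V z ≤ Vs + δ} ∩ {z | ε ≤ Metric.infDist z G} with hK
    have hKc : IsCompact K :=
      (hsubc (Vs + δ)).inter_right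
        (isClosed_le continuous_const (Metric.continuous_infDist_pt G))
    rcases K.eq_empty_or_nonempty with hKe | hKne
    · refine ⟨0, fun n _ => ?_⟩
      by_contra hcon
      push_neg at hcon
      have : y n ∈ K := ⟨hS n, hcon⟩
      rw [hKe] at this
      exact this
    · obtain ⟨w₀, hw₀K, hw₀min⟩ := hKc.exists_isMinOn hKne hVcont.continuousOn
      have hw₀G : w₀ ∉ G := by
        intro hc
        have h0 : Metric.infDist w₀ G = 0 := Metric.infDist_zero_of_mem hc
        have h1 : ε ≤ Metric.infDist w₀ G := hw₀K.2
        rw [h0] at h1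
        linarith
      have hμ : Vs < V w₀ :=
        lt_of_le_of_ne (hGmin w₀) (fun hc => hw₀G ((hGset w₀).2 hc.symm))
      have hev : ∀ᶠ n in atTop, V (y n) < V w₀ := htendV.eventually_lt_const hμ
      obtain ⟨N, hN⟩ := eventually_atTop.1 hev
      refine ⟨N, fun n hn => ?_⟩
      by_contra hcon
      push_neg at hcon
      have hyK : y n ∈ K := ⟨hS n, hcon⟩
      have := isMinOn_iff.1 hw₀min (y n) hyK
      linarith [hN n hn]
  obtain ⟨N, hN⟩ := hgoal
  refine ⟨N, fun n hn => ?_⟩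
  rw [Real.dist_eq, sub_zero, abs_of_nonneg (Metric.infDist_nonneg)]
  exact hN n hn
end
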